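/- arXiv:2303.05494 — 2 statements merged into one kernel-verified Lean document; each statement's English description precedes it below -/
import Mathlib

section
/- For all Schwartz functions f, g : ℝ² → ℂ, the Moyal product f ⋆_ℏ g is again a Schwartz function on ℝ². -/
open MeasureTheory Complex Filter SchwartzMap
open scoped FourierTransform RealInnerProductSpace

/-- The Moyal kernel at base point `m`, evaluated on `x = (p'',q'')`, `y = (p',q')`. -/
noncomputable def moyalKernel (ℏ : ℝ) (m x y : ℝ × ℝ) : ℂ :=
  Complex.exp (Complex.I / (2 * ℏ) *
    (((x.1 - m.1) * (m.2 - y.2) - (x.2 - m.2) * (m.1 - y.1) : ℝ) : ℂ))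

/-- The Moyal product of two functions on ℝ². -/
noncomputable def moyal (ℏ : ℝ) (f g : ℝ × ℝ → ℂ) : ℝ × ℝ → ℂ :=
  fun m => ((4 * Real.pi * ℏ) ^ 2 : ℝ)⁻¹ •
    ∫ xy : (ℝ × ℝ) × (ℝ × ℝ), f xy.1 * g xy.2 * moyalKernel ℏ m xy.1 xy.2


section TemperateAux

variable {E : Type*} [NormedAddCommGroup E] [NormedSpace ℝ E]

lemma tg_mul {f g : E → ℝ} (hf : Function.HasTemperateGrowth f)
    (hg : Function.HasTemperateGrowth g) :
    Function.HasTemperateGrowth (fun x => f x * g x) := by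
  refine ⟨hf.1.mul hg.1, fun n => ?_⟩
  obtain ⟨k, C, hC, hbound⟩ := hf.norm_iteratedFDeriv_le_uniform n
  obtain ⟨k', C', hC', hbound'⟩ := hg.norm_iteratedFDeriv_le_uniform n
  refine ⟨k + k', (∑ i ∈ Finset.range (n+1), (n.choose i : ℝ)) * (C * C'), fun x => ?_⟩
  have h1x : (0:ℝ) ≤ 1 + ‖x‖ := by positivity
  calc ‖iteratedFDeriv ℝ n (fun x => f x * g x) x‖
      ≤ ∑ i ∈ Finset.range (n+1), (n.choose i : ℝ) * ‖iteratedFDeriv ℝ i f x‖ *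
          ‖iteratedFDeriv ℝ (n - i) g x‖ :=
        norm_iteratedFDeriv_mul_le hf.1 hg.1 x (mod_cast le_top)
    _ ≤ ∑ i ∈ Finset.range (n+1), (n.choose i : ℝ) * (C * (1+‖x‖)^k) * (C' * (1+‖x‖)^k') := by
        gcongr with i hi
        · exact hbound i (Finset.mem_range_succ_iff.mp hi) x
        · exact hbound' (n - i) (by omega) x
    _ = (∑ i ∈ Finset.range (n+1), (n.choose i : ℝ)) * (C * C') * (1+‖x‖)^(k+k') := by
        rw [Finset.sum_mul, Finset.sum_mul]
        refine Finset.sum_congr rfl fun i _ => ?_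
        rw [pow_add]; ring

lemma tg_add {f g : E → ℝ} (hf : Function.HasTemperateGrowth f)
    (hg : Function.HasTemperateGrowth g) :
    Function.HasTemperateGrowth (fun x => f x + g x) := by
  refine ⟨hf.1.add hg.1, fun n => ?_⟩
  obtain ⟨k, C, hC, hbound⟩ := hf.norm_iteratedFDeriv_le_uniform n
  obtain ⟨k', C', hC', hbound'⟩ := hg.norm_iteratedFDeriv_le_uniform n
  refine ⟨k + k', C + C', fun x => ?_⟩
  have h1x : (1:ℝ) ≤ 1 + ‖x‖ := by simp [norm_nonneg]
  have h0x : (0:ℝ) ≤ 1 + ‖x‖ := by positivity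
  have : iteratedFDeriv ℝ n (fun x => f x + g x) x =
      iteratedFDeriv ℝ n f x + iteratedFDeriv ℝ n g x :=
    iteratedFDeriv_add_apply (hf.1.contDiffAt.of_le (mod_cast le_top)) (hg.1.contDiffAt.of_le (mod_cast le_top))
  rw [this]
  calc ‖iteratedFDeriv ℝ n f x + iteratedFDeriv ℝ n g x‖
      ≤ ‖iteratedFDeriv ℝ n f x‖ + ‖iteratedFDeriv ℝ n g x‖ := norm_add_le _ _
    _ ≤ C * (1+‖x‖)^k + C' * (1+‖x‖)^k' :=
        add_le_add (hbound n le_rfl x) (hbound' n le_rfl x)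
    _ ≤ C * (1+‖x‖)^(k+k') + C' * (1+‖x‖)^(k+k') := by
        gcongr <;> first | exact h1x | omega
    _ = (C + C') * (1+‖x‖)^(k+k') := by ring

end TemperateAux

section ExpAux

variable {E : Type*} [NormedAddCommGroup E] [NormedSpace ℝ E]

lemma iteratedDeriv_expI (n : ℕ) :
    iteratedDeriv n (fun t : ℝ => Complex.exp (Complex.I * t)) =
      fun t : ℝ => Complex.I ^ n * Complex.exp (Complex.I * t) := by
  induction n with
  | zero => simp
  | succ n ih =>
    rw [iteratedDeriv_succ, ih]
    funext t
    have h1 : HasDerivAt (fun t : ℝ => (Complex.I * t : ℂ)) Complex.I t := by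
      simpa using (Complex.ofRealCLM.hasDerivAt (x := t)).const_mul Complex.I
    have hd : HasDerivAt (fun t : ℝ => Complex.exp (Complex.I * t))
        (Complex.I * Complex.exp (Complex.I * t)) t := by
      simpa [mul_comm] using h1.cexp
    rw [(hd.const_mul (Complex.I ^ n)).deriv]
    ring

lemma contDiff_expI : ContDiff ℝ (⊤ : ℕ∞) (fun t : ℝ => Complex.exp (Complex.I * t)) :=
  Complex.contDiff_exp.comp (contDiff_const.mul Complex.ofRealCLM.contDiff)

lemma norm_iteratedFDeriv_expI (n : ℕ) (t : ℝ) :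
    ‖iteratedFDeriv ℝ n (fun t : ℝ => Complex.exp (Complex.I * t)) t‖ = 1 := by
  rw [norm_iteratedFDeriv_eq_norm_iteratedDeriv, iteratedDeriv_expI]
  simp [Complex.norm_exp]

lemma tg_expI {φ : E → ℝ} (hφ : Function.HasTemperateGrowth φ) :
    Function.HasTemperateGrowth (fun x => Complex.exp (Complex.I * φ x)) := by
  have hcomp : (fun x => Complex.exp (Complex.I * φ x)) =
      (fun t : ℝ => Complex.exp (Complex.I * t)) ∘ φ := rfl
  refine ⟨by rw [hcomp]; exact (contDiff_expI.of_le (mod_cast le_top)).comp hφ.1, fun n => ?_⟩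
  obtain ⟨k, C, hC, hbound⟩ := hφ.norm_iteratedFDeriv_le_uniform n
  refine ⟨k * n, (n.factorial : ℝ) * (1 + C) ^ n, fun x => ?_⟩
  have h1x : (1:ℝ) ≤ 1 + ‖x‖ := by simp [norm_nonneg]
  have h0x : (0:ℝ) ≤ 1 + ‖x‖ := by positivity
  have hD1 : (1:ℝ) ≤ (1 + C) * (1 + ‖x‖) ^ k := by
    have : (1:ℝ) ≤ (1 + C) := by linarith
    have h2 : (1:ℝ) ≤ (1 + ‖x‖) ^ k := one_le_pow₀ h1x
    nlinarith
  have key : ‖iteratedFDeriv ℝ n ((fun t : ℝ => Complex.exp (Complex.I * t)) ∘ φ) x‖ ≤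
      (n.factorial : ℝ) * 1 * ((1 + C) * (1 + ‖x‖) ^ k) ^ n := by
    apply norm_iteratedFDeriv_comp_le contDiff_expI hφ.1 (mod_cast le_top) x
    · intro i _
      rw [norm_iteratedFDeriv_expI]
    · intro i hi1 hin
      calc ‖iteratedFDeriv ℝ i φ x‖ ≤ C * (1 + ‖x‖) ^ k := hbound i hin x
        _ ≤ (1 + C) * (1 + ‖x‖) ^ k := by gcongr; linarith
        _ ≤ ((1 + C) * (1 + ‖x‖) ^ k) ^ i := le_self_pow₀ hD1 (by omega)
  rw [hcomp]
  refine key.trans ?_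
  rw [mul_one, mul_pow, ← pow_mul]
  exact le_of_eq (by ring)

end ExpAux

section Tensor

variable {D : Type*} [NormedAddCommGroup D] [NormedSpace ℝ D]
variable {E : Type*} [NormedAddCommGroup E] [NormedSpace ℝ E]

lemma norm_iteratedFDeriv_comp_fst (f : SchwartzMap D ℂ) (z : D × E) (i : ℕ) :
    ‖iteratedFDeriv ℝ i (fun z : D × E => f z.1) z‖ ≤ ‖iteratedFDeriv ℝ i (⇑f) z.1‖ := by
  have heq : (fun z : D × E => f z.1) = (⇑f) ∘ (ContinuousLinearMap.fst ℝ D E) := rfl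
  rw [heq, ContinuousLinearMap.iteratedFDeriv_comp_right _ (f.smooth ⊤) _ (mod_cast le_top)]
  refine (ContinuousMultilinearMap.norm_compContinuousLinearMap_le _ _).trans ?_
  have : ∀ j : Fin i, ‖(ContinuousLinearMap.fst ℝ D E)‖ ≤ 1 := fun j =>
    ContinuousLinearMap.opNorm_le_bound _ zero_le_one (fun x => by
      simpa using norm_fst_le x)
  calc ‖iteratedFDeriv ℝ i (⇑f) z.1‖ * ∏ _j : Fin i, ‖ContinuousLinearMap.fst ℝ D E‖
      ≤ ‖iteratedFDeriv ℝ i (⇑f) z.1‖ * ∏ _j : Fin i, 1 := by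
        exact mul_le_mul_of_nonneg_left (Finset.prod_le_prod
          (fun j _ => norm_nonneg _) (fun j _ => this j)) (norm_nonneg _)
    _ = ‖iteratedFDeriv ℝ i (⇑f) z.1‖ := by simp

lemma norm_iteratedFDeriv_comp_snd (g : SchwartzMap E ℂ) (z : D × E) (i : ℕ) :
    ‖iteratedFDeriv ℝ i (fun z : D × E => g z.2) z‖ ≤ ‖iteratedFDeriv ℝ i (⇑g) z.2‖ := by
  have heq : (fun z : D × E => g z.2) = (⇑g) ∘ (ContinuousLinearMap.snd ℝ D E) := rfl
  rw [heq, ContinuousLinearMap.iteratedFDeriv_comp_right _ (g.smooth ⊤) _ (mod_cast le_top)]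
  refine (ContinuousMultilinearMap.norm_compContinuousLinearMap_le _ _).trans ?_
  have : ∀ j : Fin i, ‖(ContinuousLinearMap.snd ℝ D E)‖ ≤ 1 := fun j =>
    ContinuousLinearMap.opNorm_le_bound _ zero_le_one (fun x => by
      simpa using norm_snd_le x)
  calc ‖iteratedFDeriv ℝ i (⇑g) z.2‖ * ∏ _j : Fin i, ‖ContinuousLinearMap.snd ℝ D E‖
      ≤ ‖iteratedFDeriv ℝ i (⇑g) z.2‖ * ∏ _j : Fin i, 1 := by
        exact mul_le_mul_of_nonneg_left (Finset.prod_le_prod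
          (fun j _ => norm_nonneg _) (fun j _ => this j)) (norm_nonneg _)
    _ = ‖iteratedFDeriv ℝ i (⇑g) z.2‖ := by simp

noncomputable def tensorSchwartz (f : SchwartzMap D ℂ) (g : SchwartzMap E ℂ) :
    SchwartzMap (D × E) ℂ where
  toFun z := f z.1 * g z.2
  smooth' := (f.smooth'.comp contDiff_fst).mul (g.smooth'.comp contDiff_snd)
  decay' := by
    intro k n
    set Sf : ℝ := 2 ^ k *
      ((Finset.Iic (k,n)).sup (fun m : ℕ × ℕ => SchwartzMap.seminorm ℝ m.1 m.2)) f with hSf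
    set Sg : ℝ := 2 ^ k *
      ((Finset.Iic (k,n)).sup (fun m : ℕ × ℕ => SchwartzMap.seminorm ℝ m.1 m.2)) g with hSg
    refine ⟨(∑ i ∈ Finset.range (n+1), (n.choose i : ℝ)) * (Sf * Sg), fun z => ?_⟩
    have h01 : (0:ℝ) ≤ 1 + ‖z.1‖ := by positivity
    have h02 : (0:ℝ) ≤ 1 + ‖z.2‖ := by positivity
    have hz : ‖z‖ ≤ (1 + ‖z.1‖) * (1 + ‖z.2‖) := by
      rw [Prod.norm_def]
      apply max_le <;> nlinarith [norm_nonneg z.1, norm_nonneg z.2]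
    have hzk : ‖z‖ ^ k ≤ (1 + ‖z.1‖) ^ k * (1 + ‖z.2‖) ^ k := by
      rw [← mul_pow]
      exact pow_le_pow_left₀ (norm_nonneg _) hz k
    have key := norm_iteratedFDeriv_mul_le (𝕜 := ℝ) (f := fun z : D × E => f z.1)
      (g := fun z : D × E => g z.2) (f.smooth'.comp contDiff_fst)
      (g.smooth'.comp contDiff_snd) z (n := n) (mod_cast le_top)
    calc ‖z‖ ^ k * ‖iteratedFDeriv ℝ n (fun z : D × E => f z.1 * g z.2) z‖
        ≤ ((1 + ‖z.1‖) ^ k * (1 + ‖z.2‖) ^ k) *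
            ∑ i ∈ Finset.range (n+1), (n.choose i : ℝ) *
              ‖iteratedFDeriv ℝ i (⇑f) z.1‖ * ‖iteratedFDeriv ℝ (n-i) (⇑g) z.2‖ := by
          refine mul_le_mul hzk (key.trans ?_) (by positivity) (by positivity)
          refine Finset.sum_le_sum fun i hi => ?_
          gcongr
          · exact norm_iteratedFDeriv_comp_fst f z i
          · exact norm_iteratedFDeriv_comp_snd g z (n-i)
      _ = ∑ i ∈ Finset.range (n+1), (n.choose i : ℝ) *
            (((1 + ‖z.1‖) ^ k * ‖iteratedFDeriv ℝ i (⇑f) z.1‖) *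
             ((1 + ‖z.2‖) ^ k * ‖iteratedFDeriv ℝ (n-i) (⇑g) z.2‖)) := by
          rw [Finset.mul_sum]
          exact Finset.sum_congr rfl fun i _ => by ring
      _ ≤ ∑ i ∈ Finset.range (n+1), (n.choose i : ℝ) * (Sf * Sg) := by
          refine Finset.sum_le_sum fun i hi => ?_
          have hin : i ≤ n := Finset.mem_range_succ_iff.mp hi
          have h1 := one_add_le_sup_seminorm_apply (𝕜 := ℝ) (m := (k,n)) le_rfl hin f z.1
          have h2 := one_add_le_sup_seminorm_apply (𝕜 := ℝ) (m := (k,n)) le_rfl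
            (Nat.sub_le n i) g z.2
          have hSf0 : (0:ℝ) ≤ Sf := by
            rw [hSf]; positivity
          exact mul_le_mul_of_nonneg_left
            (mul_le_mul h1 h2 (by positivity) hSf0) (by positivity)
      _ = (∑ i ∈ Finset.range (n+1), (n.choose i : ℝ)) * (Sf * Sg) := by
          rw [Finset.sum_mul]

end Tensor

noncomputable section EquivAux

abbrev V4 := EuclideanSpace ℝ (Fin 4)

def eqLin : V4 ≃ₗ[ℝ] (ℝ × ℝ) × (ℝ × ℝ) where
  toFun v := ((v 0, v 1), (v 2, v 3))
  invFun z := WithLp.toLp 2 ![z.1.1, z.1.2, z.2.1, z.2.2]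
  map_add' v w := rfl
  map_smul' c v := rfl
  left_inv v := by
    ext i
    fin_cases i <;> rfl
  right_inv z := rfl

def eqCLE : V4 ≃L[ℝ] (ℝ × ℝ) × (ℝ × ℝ) := eqLin.toContinuousLinearEquiv

lemma eqCLE_apply (v : V4) : eqCLE v = ((v 0, v 1), (v 2, v 3)) := rfl

lemma eqCLE_measurePreserving : MeasurePreserving eqCLE volume volume := by
  have m1 : MeasurePreserving (MeasurableEquiv.toLp 2 (Fin 4 → ℝ)).symm volume volume :=
    EuclideanSpace.volume_preserving_symm_measurableEquiv_toLp (Fin 4)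
  have m2 : MeasurePreserving
      (MeasurableEquiv.piCongrLeft (fun _ : Fin 4 => ℝ) (finSumFinEquiv (m := 2) (n := 2))).symm volume volume :=
    MeasurePreserving.symm
      (MeasurableEquiv.piCongrLeft (fun _ : Fin 4 => ℝ) (finSumFinEquiv (m := 2) (n := 2)))
      (volume_measurePreserving_piCongrLeft (fun _ : Fin 4 => ℝ) (finSumFinEquiv (m := 2) (n := 2)))
  have m3 : MeasurePreserving
      (MeasurableEquiv.sumPiEquivProdPi (fun _ : Fin 2 ⊕ Fin 2 => ℝ)) volume volume :=
    volume_measurePreserving_sumPiEquivProdPi _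
  have m4 : MeasurePreserving
      (Prod.map (MeasurableEquiv.finTwoArrow (α := ℝ)) (MeasurableEquiv.finTwoArrow (α := ℝ)))
      volume volume :=
    (volume_preserving_finTwoArrow ℝ).prod (volume_preserving_finTwoArrow ℝ)
  have comp := ((m4.comp m3).comp m2).comp m1
  have : (Prod.map (MeasurableEquiv.finTwoArrow (α := ℝ)) (MeasurableEquiv.finTwoArrow (α := ℝ)))
      ∘ (MeasurableEquiv.sumPiEquivProdPi (fun _ : Fin 2 ⊕ Fin 2 => ℝ))
      ∘ (MeasurableEquiv.piCongrLeft (fun _ : Fin 4 => ℝ) (finSumFinEquiv (m := 2) (n := 2))).symm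
      ∘ (MeasurableEquiv.toLp 2 (Fin 4 → ℝ)).symm = ⇑eqCLE := by
    funext v
    rfl
  rw [← this]
  exact comp

end EquivAux

noncomputable section WAux

def Jmap : (ℝ × ℝ) →L[ℝ] (ℝ × ℝ) × (ℝ × ℝ) :=
  ((ContinuousLinearMap.snd ℝ ℝ ℝ).prod (-(ContinuousLinearMap.fst ℝ ℝ ℝ))).prod
    ((-(ContinuousLinearMap.snd ℝ ℝ ℝ)).prod (ContinuousLinearMap.fst ℝ ℝ ℝ))

def Wmap (ℏ : ℝ) : (ℝ × ℝ) →L[ℝ] V4 :=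
  (-(4 * Real.pi * ℏ)⁻¹) • ((eqCLE.symm : ((ℝ×ℝ)×(ℝ×ℝ)) ≃L[ℝ] V4).toContinuousLinearMap.comp Jmap)

lemma Wmap_coord (ℏ : ℝ) (m : ℝ × ℝ) :
    (Wmap ℏ m) 0 = -(4 * Real.pi * ℏ)⁻¹ * m.2 ∧
    (Wmap ℏ m) 1 = -(4 * Real.pi * ℏ)⁻¹ * -m.1 ∧
    (Wmap ℏ m) 2 = -(4 * Real.pi * ℏ)⁻¹ * -m.2 ∧
    (Wmap ℏ m) 3 = -(4 * Real.pi * ℏ)⁻¹ * m.1 :=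
  ⟨rfl, rfl, rfl, rfl⟩

lemma norm_le_Wmap (ℏ : ℝ) (hℏ : 0 < ℏ) (m : ℝ × ℝ) :
    ‖m‖ ≤ (4 * Real.pi * ℏ) * (1 + ‖Wmap ℏ m‖) := by
  have hπ := Real.pi_pos
  have hc : (0:ℝ) < 4 * Real.pi * ℏ := by positivity
  set u : V4 := (eqCLE.symm : ((ℝ×ℝ)×(ℝ×ℝ)) ≃L[ℝ] V4) ((m.2, -m.1), (-m.2, m.1)) with hu
  have hWm : Wmap ℏ m = (-(4 * Real.pi * ℏ)⁻¹) • u := rfl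
  have hnu : ‖u‖ = Real.sqrt (m.2^2 + m.1^2 + m.2^2 + m.1^2) := by
    rw [EuclideanSpace.norm_eq]
    congr 1
    rw [Fin.sum_univ_four]
    have h0 : u 0 = m.2 := rfl
    have h1 : u 1 = -m.1 := rfl
    have h2 : u 2 = -m.2 := rfl
    have h3 : u 3 = m.1 := rfl
    rw [h0, h1, h2, h3]
    simp [Real.norm_eq_abs, sq_abs]
  have hmu : ‖m‖ ≤ ‖u‖ := by
    rw [hnu, Prod.norm_def]
    have hs1 : |m.1| ≤ Real.sqrt (m.2^2 + m.1^2 + m.2^2 + m.1^2) := by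
      rw [← Real.sqrt_sq_eq_abs]
      apply Real.sqrt_le_sqrt; nlinarith [sq_nonneg m.1, sq_nonneg m.2]
    have hs2 : |m.2| ≤ Real.sqrt (m.2^2 + m.1^2 + m.2^2 + m.1^2) := by
      rw [← Real.sqrt_sq_eq_abs]
      apply Real.sqrt_le_sqrt; nlinarith [sq_nonneg m.1, sq_nonneg m.2]
    simpa [Real.norm_eq_abs] using max_le hs1 hs2
  have hWnorm : ‖Wmap ℏ m‖ = (4 * Real.pi * ℏ)⁻¹ * ‖u‖ := by
    rw [hWm, norm_smul, Real.norm_eq_abs, abs_neg, abs_of_pos (inv_pos.mpr hc)]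
  have : ‖u‖ = (4 * Real.pi * ℏ) * ‖Wmap ℏ m‖ := by
    rw [hWnorm]; field_simp
  calc ‖m‖ ≤ ‖u‖ := hmu
    _ = (4 * Real.pi * ℏ) * ‖Wmap ℏ m‖ := this
    _ ≤ (4 * Real.pi * ℏ) * (1 + ‖Wmap ℏ m‖) := by
        have := norm_nonneg (Wmap ℏ m); nlinarith

end WAux

/-- The Moyal product of two Schwartz functions is again a Schwartz function. -/
theorem moyal_schwartz (ℏ : ℝ) (hℏ : 0 < ℏ) (f g : SchwartzMap (ℝ × ℝ) ℂ) :
    ∃ F : SchwartzMap (ℝ × ℝ) ℂ, ⇑F = moyal ℏ (⇑f) (⇑g) := by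
  have hπ := Real.pi_pos
  -- the quadratic phase
  have h12 : Function.HasTemperateGrowth (fun z : (ℝ×ℝ)×(ℝ×ℝ) => z.1.2) :=
    ((ContinuousLinearMap.snd ℝ ℝ ℝ).comp
      (ContinuousLinearMap.fst ℝ (ℝ×ℝ) (ℝ×ℝ))).hasTemperateGrowth
  have h11 : Function.HasTemperateGrowth (fun z : (ℝ×ℝ)×(ℝ×ℝ) => z.1.1) :=
    ((ContinuousLinearMap.fst ℝ ℝ ℝ).comp
      (ContinuousLinearMap.fst ℝ (ℝ×ℝ) (ℝ×ℝ))).hasTemperateGrowth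
  have h21 : Function.HasTemperateGrowth (fun z : (ℝ×ℝ)×(ℝ×ℝ) => z.2.1) :=
    ((ContinuousLinearMap.fst ℝ ℝ ℝ).comp
      (ContinuousLinearMap.snd ℝ (ℝ×ℝ) (ℝ×ℝ))).hasTemperateGrowth
  have h22 : Function.HasTemperateGrowth (fun z : (ℝ×ℝ)×(ℝ×ℝ) => z.2.2) :=
    ((ContinuousLinearMap.snd ℝ ℝ ℝ).comp
      (ContinuousLinearMap.snd ℝ (ℝ×ℝ) (ℝ×ℝ))).hasTemperateGrowth
  have hφ : Function.HasTemperateGrowth (fun z : (ℝ×ℝ)×(ℝ×ℝ) =>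
      (2*ℏ)⁻¹ * (z.1.2 * z.2.1) + (-(2*ℏ)⁻¹) * (z.1.1 * z.2.2)) :=
    tg_add (tg_mul (Function.HasTemperateGrowth.const _) (tg_mul h12 h21))
      (tg_mul (Function.HasTemperateGrowth.const _) (tg_mul h11 h22))
  have hΘ := tg_expI hφ
  let H : SchwartzMap ((ℝ×ℝ)×(ℝ×ℝ)) ℂ :=
    SchwartzMap.bilinLeftCLM (ContinuousLinearMap.mul ℝ ℂ) hΘ (tensorSchwartz f g)
  let HV : SchwartzMap V4 ℂ := SchwartzMap.compCLMOfContinuousLinearEquiv ℝ eqCLE H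
  let G : SchwartzMap V4 ℂ := SchwartzMap.fourierTransformCLM ℝ HV
  have hWtg : Function.HasTemperateGrowth ⇑(Wmap ℏ) := (Wmap ℏ).hasTemperateGrowth
  have hWup : ∃ (k : ℕ) (C : ℝ), ∀ x : ℝ×ℝ, ‖x‖ ≤ C * (1 + ‖Wmap ℏ x‖)^k :=
    ⟨1, 4*Real.pi*ℏ, fun m => by simpa using norm_le_Wmap ℏ hℏ m⟩
  refine ⟨(((4*Real.pi*ℏ)^2 : ℝ))⁻¹ • SchwartzMap.compCLM ℝ hWtg hWup G, ?_⟩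
  funext m
  have hL : ((((4*Real.pi*ℏ)^2 : ℝ))⁻¹ • SchwartzMap.compCLM ℝ hWtg hWup G) m
      = (((4*Real.pi*ℏ)^2 : ℝ))⁻¹ • (𝓕 (⇑HV) (Wmap ℏ m)) := rfl
  rw [hL, Real.fourier_eq]
  show _ = moyal ℏ (⇑f) (⇑g) m
  unfold moyal
  congr 1
  have hint : ∀ v : V4, 𝐞 (-⟪v, Wmap ℏ m⟫) • HV v =
      (fun z : (ℝ×ℝ)×(ℝ×ℝ) => f z.1 * g z.2 * moyalKernel ℏ m z.1 z.2) (eqCLE v) := by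
    intro v
    have hHV : HV v = (f (v 0, v 1) * g (v 2, v 3)) *
        Complex.exp (Complex.I * ((2*ℏ)⁻¹ * (v 1 * v 2) + (-(2*ℏ)⁻¹) * (v 0 * v 3) : ℝ)) := rfl
    have hinner : ⟪v, Wmap ℏ m⟫ =
        -(4 * Real.pi * ℏ)⁻¹ * (v 0 * m.2 - v 1 * m.1 - v 2 * m.2 + v 3 * m.1) := by
      obtain ⟨hW0, hW1, hW2, hW3⟩ := Wmap_coord ℏ m
      rw [PiLp.inner_apply]
      simp only [RCLike.inner_apply, conj_trivial]
      rw [Fin.sum_univ_four, hW0, hW1, hW2, hW3]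
      ring
    rw [hHV, Circle.smul_def, Real.fourierChar_apply, hinner]
    show _ = f (v 0, v 1) * g (v 2, v 3) * moyalKernel ℏ m (v 0, v 1) (v 2, v 3)
    rw [moyalKernel]
    have hexp : Complex.exp (↑(2 * Real.pi * -(-(4 * Real.pi * ℏ)⁻¹ *
          (v 0 * m.2 - v 1 * m.1 - v 2 * m.2 + v 3 * m.1))) * Complex.I) *
        Complex.exp (Complex.I * ((2*ℏ)⁻¹ * (v 1 * v 2) + (-(2*ℏ)⁻¹) * (v 0 * v 3) : ℝ)) =
        Complex.exp (Complex.I / (2 * ℏ) *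
          (((v 0 - m.1) * (m.2 - v 3) - (v 1 - m.2) * (m.1 - v 2) : ℝ) : ℂ)) := by
      rw [← Complex.exp_add]
      congr 1
      have hℏ' : (ℏ : ℂ) ≠ 0 := Complex.ofReal_ne_zero.mpr hℏ.ne'
      have hπ' : (Real.pi : ℂ) ≠ 0 := Complex.ofReal_ne_zero.mpr hπ.ne'
      push_cast
      field_simp
      ring
    calc Complex.exp (↑(2 * Real.pi * -(-(4 * Real.pi * ℏ)⁻¹ *
            (v 0 * m.2 - v 1 * m.1 - v 2 * m.2 + v 3 * m.1))) * Complex.I) *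
          ((f (v 0, v 1) * g (v 2, v 3)) *
            Complex.exp (Complex.I * ((2*ℏ)⁻¹ * (v 1 * v 2) + (-(2*ℏ)⁻¹) * (v 0 * v 3) : ℝ))) =
        (f (v 0, v 1) * g (v 2, v 3)) *
          (Complex.exp (↑(2 * Real.pi * -(-(4 * Real.pi * ℏ)⁻¹ *
            (v 0 * m.2 - v 1 * m.1 - v 2 * m.2 + v 3 * m.1))) * Complex.I) *
            Complex.exp (Complex.I * ((2*ℏ)⁻¹ * (v 1 * v 2) + (-(2*ℏ)⁻¹) * (v 0 * v 3) : ℝ))) := by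
          ring
      _ = f (v 0, v 1) * g (v 2, v 3) * Complex.exp (Complex.I / (2 * ℏ) *
            (((v 0 - m.1) * (m.2 - v 3) - (v 1 - m.2) * (m.1 - v 2) : ℝ) : ℂ)) := by
          rw [hexp]
  have hcomp := eqCLE_measurePreserving.integral_comp
    (eqCLE.toHomeomorph.measurableEmbedding)
    (fun z : (ℝ×ℝ)×(ℝ×ℝ) => f z.1 * g z.2 * moyalKernel ℏ m z.1 z.2)
  simp only [hint]
  exact hcomp
end

section
/- The Moyal product normalization holds: for every ℏ > 0 and every (p,q) ∈ ℝ², the improper integral defining 1 ⋆_ℏ 1 equals 1, i.e. lim_{L → ∞} (4πℏ)⁻² ∫_{[−L,L]⁴} exp((i/(2ℏ))·[(p''−p)(q−q') − (q''−q)(p−p')]) dp'' dq'' dp' dq' = 1. -/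
open MeasureTheory Complex Filter

open Real Set Topology

lemma sin_exp_antideriv (u : ℝ) (A : ℝ) :
    ∫ t in (0:ℝ)..A, Real.sin t * Real.exp (-(u*t)) =
      (1 - Real.exp (-(u*A)) * (Real.cos A + u * Real.sin A)) / (1 + u^2) := by
  have key : ∀ t ∈ Set.uIcc (0:ℝ) A,
      HasDerivAt (fun t => Real.exp (-(u*t)) * (-(u * Real.sin t) - Real.cos t) / (1+u^2))
        (Real.sin t * Real.exp (-(u*t))) t := by
    intro t _
    have h1 : HasDerivAt (fun t : ℝ => Real.exp (-(u*t))) (Real.exp (-(u*t)) * (-u)) t := by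
      have := (((hasDerivAt_id t).const_mul u).neg).exp
      simpa using this
    have h2 : HasDerivAt (fun t : ℝ => -(u * Real.sin t) - Real.cos t)
        (-(u * Real.cos t) - (-Real.sin t)) t :=
      (((Real.hasDerivAt_sin t).const_mul u).neg).sub (Real.hasDerivAt_cos t)
    have h3 := (h1.mul h2).div_const (1+u^2)
    refine h3.congr_deriv ?_
    have hu : (1:ℝ) + u^2 ≠ 0 := by positivity
    rw [div_eq_iff hu]
    ring
  have hc : IntervalIntegrable (fun t => Real.sin t * Real.exp (-(u*t))) volume 0 A :=
    (Real.continuous_sin.mul (by continuity)).intervalIntegrable 0 A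
  rw [intervalIntegral.integral_eq_sub_of_hasDerivAt key hc]
  simp [Real.exp_zero]
  ring

lemma integral_exp_neg_mul_Ioi' {c : ℝ} (hc : 0 < c) :
    ∫ u in Set.Ioi (0:ℝ), Real.exp (-(c*u)) = 1/c := by
  have := integral_comp_mul_left_Ioi (fun x => Real.exp (-x)) 0 hc
  simp only [mul_zero, integral_exp_neg_Ioi, neg_zero, Real.exp_zero, smul_eq_mul, mul_one] at this
  simpa [one_div] using this

lemma si_eq {A : ℝ} (hA : 0 < A) :
    ∫ t in (0:ℝ)..A, Real.sin t / t
      = ∫ u in Set.Ioi (0:ℝ), (1 - Real.exp (-(u*A)) * (Real.cos A + u * Real.sin A)) / (1+u^2) := by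
  have hmeas : AEStronglyMeasurable (Function.uncurry (fun t u => Real.sin t * Real.exp (-(u*t))))
      ((volume.restrict (Set.Ioc (0:ℝ) A)).prod (volume.restrict (Set.Ioi (0:ℝ)))) := by
    apply Continuous.aestronglyMeasurable
    exact (Real.continuous_sin.comp continuous_fst).mul (by continuity)
  have hint : Integrable (Function.uncurry (fun t u => Real.sin t * Real.exp (-(u*t))))
      ((volume.restrict (Set.Ioc (0:ℝ) A)).prod (volume.restrict (Set.Ioi (0:ℝ)))) := by
    rw [integrable_prod_iff hmeas]
    constructor
    · filter_upwards [ae_restrict_mem measurableSet_Ioc] with t ht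
      simpa [mul_comm] using ((exp_neg_integrableOn_Ioi 0 ht.1).const_mul (Real.sin t))
    · refine ⟨hmeas.norm.integral_prod_right', HasFiniteIntegral.restrict_of_bounded (C := 1) (by simp [Real.volume_Ioc]) ?_⟩
      filter_upwards [ae_restrict_mem measurableSet_Ioc] with t ht
      have h1 : ∫ u in Set.Ioi (0:ℝ), ‖Real.sin t * Real.exp (-(u*t))‖
            = |Real.sin t| * (1/t) := by
          rw [← integral_exp_neg_mul_Ioi' ht.1]
          rw [← integral_const_mul]
          congr 1 with u
          rw [norm_mul, Real.norm_eq_abs, Real.norm_eq_abs,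
            _root_.abs_of_pos (Real.exp_pos _), mul_comm u t]
      simp only [Function.uncurry_apply_pair]
      rw [Real.norm_eq_abs, h1, _root_.abs_of_nonneg (mul_nonneg (abs_nonneg _) (one_div_nonneg.2 ht.1.le))]
      rw [mul_one_div, div_le_one ht.1]
      calc |Real.sin t| ≤ |t| := Real.abs_sin_le_abs
      _ = t := _root_.abs_of_pos ht.1
  -- LHS as set integral
  rw [intervalIntegral.integral_of_le hA.le]
  have hleft : ∀ᵐ t ∂(volume.restrict (Set.Ioc (0:ℝ) A)),
      Real.sin t / t = ∫ u in Set.Ioi (0:ℝ), Real.sin t * Real.exp (-(u*t)) := by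
    filter_upwards [ae_restrict_mem measurableSet_Ioc] with t ht
    have h2 : ∫ a in Set.Ioi (0:ℝ), Real.exp (-(a*t)) = 1/t := by
      rw [← integral_exp_neg_mul_Ioi' ht.1]
      congr 1 with u; rw [mul_comm]
    rw [integral_const_mul, h2, mul_one_div]
  rw [integral_congr_ae hleft]
  rw [integral_integral_swap hint]
  congr 1 with u
  rw [← intervalIntegral.integral_of_le hA.le, sin_exp_antideriv]

lemma err_integrable {A : ℝ} (hA : 0 < A) :
    Integrable (fun u => Real.exp (-(u*A)) * (Real.cos A + u * Real.sin A) / (1+u^2))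
      (volume.restrict (Set.Ioi (0:ℝ))) := by
  have hg : Integrable (fun u => 2 * Real.exp (-(A*u))) (volume.restrict (Set.Ioi (0:ℝ))) := by
    simpa [neg_mul] using ((exp_neg_integrableOn_Ioi 0 hA).const_mul 2)
  apply Integrable.mono' hg
  · apply Continuous.aestronglyMeasurable
    apply Continuous.div (by continuity) (by continuity)
    intro u; positivity
  · filter_upwards [ae_restrict_mem measurableSet_Ioi] with u hu
    have hu' : (0:ℝ) < u := hu
    rw [Real.norm_eq_abs, abs_div, _root_.abs_of_pos (by positivity : (0:ℝ) < 1+u^2), abs_mul,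
      _root_.abs_of_pos (Real.exp_pos _)]
    rw [div_le_iff₀ (by positivity)]
    have h1 : |Real.cos A + u * Real.sin A| ≤ 1 + u := by
      calc |Real.cos A + u * Real.sin A| ≤ |Real.cos A| + |u * Real.sin A| := abs_add_le _ _
      _ ≤ 1 + u := by
        have := Real.abs_cos_le_one A
        have h2 : |u * Real.sin A| ≤ u := by
          rw [abs_mul, _root_.abs_of_pos hu']
          nlinarith [Real.abs_sin_le_one A, abs_nonneg (Real.sin A)]
        linarith
    have h3 : 1 + u ≤ 2 * (1+u^2) := by nlinarith [sq_nonneg (2*u-1)]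
    calc Real.exp (-(u*A)) * |Real.cos A + u * Real.sin A|
        ≤ Real.exp (-(u*A)) * (2 * (1+u^2)) := by
          apply mul_le_mul_of_nonneg_left (h1.trans h3) (Real.exp_pos _).le
    _ = 2 * Real.exp (-(A*u)) * (1+u^2) := by rw [mul_comm u A]; ring

lemma si_tendsto : Tendsto (fun A : ℝ => ∫ t in (0:ℝ)..A, Real.sin t / t)
    atTop (𝓝 (π/2)) := by
  have key : ∀ᶠ A in atTop, ∫ t in (0:ℝ)..A, Real.sin t / t
      = π/2 - ∫ u in Set.Ioi (0:ℝ),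
          Real.exp (-(u*A)) * (Real.cos A + u * Real.sin A) / (1+u^2) := by
    filter_upwards [eventually_gt_atTop 0] with A hA
    rw [si_eq hA]
    have hsplit : ∀ u : ℝ, (1 - Real.exp (-(u*A)) * (Real.cos A + u * Real.sin A)) / (1+u^2)
        = (1+u^2)⁻¹ - Real.exp (-(u*A)) * (Real.cos A + u * Real.sin A) / (1+u^2) := by
      intro u
      have : (1:ℝ)+u^2 ≠ 0 := by positivity
      field_simp
    simp_rw [hsplit]
    rw [integral_sub (integrable_inv_one_add_sq.integrableOn) (err_integrable hA)]
    rw [integral_Ioi_inv_one_add_sq]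
    simp [Real.arctan_zero]
  have herr : Tendsto (fun A : ℝ => ∫ u in Set.Ioi (0:ℝ),
      Real.exp (-(u*A)) * (Real.cos A + u * Real.sin A) / (1+u^2)) atTop (𝓝 0) := by
    apply squeeze_zero_norm' (a := fun A : ℝ => 2 * (1/A))
    · filter_upwards [eventually_gt_atTop 0] with A hA
      have hg : Integrable (fun u => 2 * Real.exp (-(A*u))) (volume.restrict (Set.Ioi (0:ℝ))) := by
        simpa [neg_mul] using ((exp_neg_integrableOn_Ioi 0 hA).const_mul 2)
      have hb := norm_integral_le_of_norm_le hg
        ?_ (f := fun u => Real.exp (-(u*A)) * (Real.cos A + u * Real.sin A) / (1+u^2))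
      · refine hb.trans ?_
        rw [integral_const_mul, integral_exp_neg_mul_Ioi' hA]
      · filter_upwards [ae_restrict_mem measurableSet_Ioi] with u hu
        have hu' : (0:ℝ) < u := hu
        rw [Real.norm_eq_abs, abs_div, _root_.abs_of_pos (by positivity : (0:ℝ) < 1+u^2), abs_mul,
          _root_.abs_of_pos (Real.exp_pos _), div_le_iff₀ (by positivity)]
        have h1 : |Real.cos A + u * Real.sin A| ≤ 1 + u := by
          calc |Real.cos A + u * Real.sin A| ≤ |Real.cos A| + |u * Real.sin A| := abs_add_le _ _
          _ ≤ 1 + u := by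
            have := Real.abs_cos_le_one A
            have h2 : |u * Real.sin A| ≤ u := by
              rw [abs_mul, _root_.abs_of_pos hu']
              nlinarith [Real.abs_sin_le_one A, abs_nonneg (Real.sin A)]
            linarith
        have h3 : 1 + u ≤ 2 * (1+u^2) := by nlinarith [sq_nonneg (2*u-1)]
        calc Real.exp (-(u*A)) * |Real.cos A + u * Real.sin A|
            ≤ Real.exp (-(u*A)) * (2 * (1+u^2)) :=
              mul_le_mul_of_nonneg_left (h1.trans h3) (Real.exp_pos _).le
        _ = 2 * Real.exp (-(A*u)) * (1+u^2) := by rw [mul_comm u A]; ring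
    · have := (tendsto_const_nhds (x := (2:ℝ)) (f := atTop)).div_atTop (tendsto_id)
      simpa [div_eq_mul_inv, one_div] using this
  have := (tendsto_const_nhds (x := π/2) (f := atTop)).sub herr
  rw [sub_zero] at this
  exact this.congr' (by filter_upwards [key] with A h using h.symm)

lemma intervalIntegrable_of_bounded {E : Type*} [NormedAddCommGroup E]
    {f : ℝ → E} (hf : AEStronglyMeasurable f volume) {C : ℝ}
    (h : ∀ u, ‖f u‖ ≤ C) (a b : ℝ) : IntervalIntegrable f volume a b := by
  rw [intervalIntegrable_iff]
  exact Measure.integrableOn_of_bounded (by rw [Set.uIoc]; exact measure_Ioc_lt_top.ne)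
    hf (ae_of_all _ h)

lemma sinc_aesm (k : ℝ) : AEStronglyMeasurable (fun u : ℝ => Real.sin (k*u) / u) volume :=
  ((Real.continuous_sin.comp (continuous_const.mul continuous_id)).measurable.div
    measurable_id).aestronglyMeasurable

lemma sinc_bound (k u : ℝ) : |Real.sin (k*u) / u| ≤ |k| := by
  rcases eq_or_ne u 0 with rfl | hu
  · simp
  · rw [abs_div]
    rw [div_le_iff₀ (abs_pos.2 hu)]
    calc |Real.sin (k*u)| ≤ |k*u| := Real.abs_sin_le_abs
    _ = |k| * |u| := abs_mul _ _

lemma intervalIntegrable_sinc (k a b : ℝ) :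
    IntervalIntegrable (fun u : ℝ => Real.sin (k*u) / u) volume a b :=
  intervalIntegrable_of_bounded (sinc_aesm k) (fun u => sinc_bound k u) a b

lemma sinc_scale {k : ℝ} (hk : 0 < k) (b : ℝ) :
    ∫ t in (0:ℝ)..b, Real.sin (k*t) / t = ∫ s in (0:ℝ)..(k*b), Real.sin s / s := by
  have h1 : ∀ t : ℝ, Real.sin (k*t) / t = k * (Real.sin (k*t) / (k*t)) := by
    intro t
    rcases eq_or_ne t 0 with rfl | ht
    · simp
    · field_simp
  simp_rw [h1]
  rw [intervalIntegral.integral_const_mul]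
  have := intervalIntegral.integral_comp_mul_left (a := (0:ℝ)) (b := b)
    (fun s => Real.sin s / s) hk.ne'
  rw [this]
  rw [mul_zero]
  rw [smul_eq_mul, ← mul_assoc, mul_inv_cancel₀ hk.ne', one_mul]

lemma integral_cexp_line {a : ℝ} (ha : a ≠ 0) (b L : ℝ) :
    ∫ y in -L..L, Complex.exp (Complex.I * ((a * (b - y) : ℝ) : ℂ))
      = Complex.exp (Complex.I * ((a * b : ℝ) : ℂ)) * ((2 * Real.sin (a*L) / a : ℝ) : ℂ) := by
  have h1 : ∀ y : ℝ, Complex.exp (Complex.I * ((a * (b - y) : ℝ) : ℂ))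
      = Complex.exp (Complex.I * ((a * b : ℝ) : ℂ)) * Complex.exp ((-(Complex.I * a)) * y) := by
    intro y
    rw [← Complex.exp_add]
    congr 1
    push_cast
    ring
  simp_rw [h1]
  rw [intervalIntegral.integral_const_mul]
  congr 1
  have hne : (-(Complex.I * a)) ≠ 0 := by
    simp [Complex.ext_iff, ha, Complex.I_ne_zero]
  rw [integral_exp_mul_complex hne]
  have e1 : (-(Complex.I * a)) * (L : ℂ) = ((-(a*L) : ℝ) : ℂ) * Complex.I := by push_cast; ring
  have e2 : (-(Complex.I * a)) * ((-L : ℝ) : ℂ) = (((a*L) : ℝ) : ℂ) * Complex.I := by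
    push_cast; ring
  rw [show ((-L : ℝ) : ℂ) = (((-L : ℝ)) : ℂ) from rfl] at *
  rw [e1]
  rw [show Complex.exp ((-(Complex.I * a)) * ((-L : ℝ) : ℂ))
      = Complex.exp ((((a*L) : ℝ) : ℂ) * Complex.I) from by rw [e2]]
  rw [Complex.exp_mul_I, Complex.exp_mul_I]
  rw [div_eq_iff hne]
  push_cast
  simp only [Complex.cos_neg, Complex.sin_neg, ← Complex.ofReal_cos, ← Complex.ofReal_sin]
  have haC : (a:ℂ) ≠ 0 := Complex.ofReal_ne_zero.2 ha
  field_simp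
  ring_nf

noncomputable def hfun (c q L u : ℝ) : ℂ :=
  Complex.exp (Complex.I * ((c*u*q : ℝ) : ℂ)) * ((2 * Real.sin (c*u*L) / (c*u) : ℝ) : ℂ)

lemma hfun_norm (c q L u : ℝ) : ‖hfun c q L u‖ = |2 * Real.sin (c*u*L) / (c*u)| := by
  rw [hfun, norm_mul]
  rw [mul_comm Complex.I]
  rw [Complex.norm_exp_ofReal_mul_I, one_mul, Complex.norm_real, Real.norm_eq_abs]

lemma hfun_aesm (c q L : ℝ) : AEStronglyMeasurable (hfun c q L) volume := by
  apply AEStronglyMeasurable.mul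
  · exact (Complex.continuous_exp.comp (by continuity)).aestronglyMeasurable
  · refine (Complex.measurable_ofReal.comp ?_).aestronglyMeasurable
    exact ((Real.continuous_sin.comp (by continuity)).measurable.const_mul 2).div
      (continuous_const.mul continuous_id).measurable

lemma hfun_bound_global {c : ℝ} (hc : 0 < c) (q L u : ℝ) : ‖hfun c q L u‖ ≤ 2 * |L| := by
  rw [hfun_norm]
  rcases eq_or_ne u 0 with rfl | hu
  · simp
  · rw [abs_div, abs_mul, div_le_iff₀ (by positivity : (0:ℝ) < |c*u|)]
    calc |(2:ℝ)| * |Real.sin (c*u*L)| ≤ 2 * |c*u*L| := by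
          rw [_root_.abs_two]
          exact mul_le_mul_of_nonneg_left Real.abs_sin_le_abs (by norm_num)
    _ = 2 * |L| * |c*u| := by rw [abs_mul]; ring

lemma hfun_bound_tail {c : ℝ} (hc : 0 < c) (q L u : ℝ) {γ : ℝ} (hγ : 0 < γ)
    (hu : γ ≤ |u|) : ‖hfun c q L u‖ ≤ 2 / (c * γ) := by
  rw [hfun_norm]
  have hu0 : u ≠ 0 := by
    intro h; rw [h] at hu; simp at hu; linarith
  rw [abs_div, abs_mul, div_le_div_iff₀ (by positivity) (by positivity)]
  calc |(2:ℝ)| * |Real.sin (c*u*L)| * (c * γ) ≤ 2 * 1 * (c * γ) := by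
        rw [_root_.abs_two]
        have := Real.abs_sin_le_one (c*u*L)
        nlinarith [mul_pos hc hγ]
  _ ≤ 2 * |c * u| := by
      rw [abs_mul, _root_.abs_of_pos hc]
      nlinarith [mul_le_mul_of_nonneg_left hu hc.le]

lemma intervalIntegral_ofReal' {a b : ℝ} {f : ℝ → ℝ} :
    ∫ x in a..b, ((f x : ℝ) : ℂ) = ((∫ x in a..b, f x : ℝ) : ℂ) := by
  simpa using RCLike.intervalIntegral_ofReal (𝕜 := ℂ) (f := f) (μ := volume) (a := a) (b := b)

lemma hfun_aesm_neg (c q L : ℝ) :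
    AEStronglyMeasurable (fun u => hfun c q L (-u)) volume := by
  apply AEStronglyMeasurable.mul
  · exact (Complex.continuous_exp.comp (by continuity)).aestronglyMeasurable
  · refine (Complex.measurable_ofReal.comp ?_).aestronglyMeasurable
    exact ((Real.continuous_sin.comp (by continuity)).measurable.const_mul 2).div
      (continuous_const.mul continuous_neg).measurable

lemma exp_I_add_exp_neg (θ : ℝ) :
    Complex.exp (Complex.I * (θ:ℂ)) + Complex.exp (Complex.I * ((-θ : ℝ):ℂ))
      = ((2 * Real.cos θ : ℝ) : ℂ) := by
  rw [mul_comm Complex.I, mul_comm Complex.I, Complex.exp_mul_I, Complex.exp_mul_I]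
  push_cast
  rw [Complex.cos_neg, Complex.sin_neg]
  ring

lemma hfun_even_sum {c : ℝ} (hc : 0 < c) (q L u : ℝ) :
    hfun c q L u + hfun c q L (-u)
      = (((2/c) * (Real.sin ((c*L+c*q)*u)/u + Real.sin ((c*L-c*q)*u)/u) : ℝ) : ℂ) := by
  rcases eq_or_ne u 0 with rfl | hu
  · simp [hfun]
  · have e1 : hfun c q L (-u)
        = Complex.exp (Complex.I * ((-(c*u*q) : ℝ):ℂ)) * ((2*Real.sin (c*u*L)/(c*u) : ℝ):ℂ) := by
      rw [hfun]
      congr 2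
      · push_cast; ring
      · rw [show c * -u * L = -(c*u*L) by ring, Real.sin_neg]
        field_simp
    rw [hfun, e1, ← add_mul, exp_I_add_exp_neg, ← Complex.ofReal_mul]
    congr 1
    rw [show (c*L+c*q)*u = c*u*L + c*u*q by ring, show (c*L-c*q)*u = c*u*L - c*u*q by ring,
      Real.sin_add, Real.sin_sub]
    field_simp
    ring

lemma twoD {c : ℝ} (hc : 0 < c) (p q : ℝ) :
    Tendsto (fun L : ℝ => ∫ x in (-L)..L, ∫ y in (-L)..L,
        Complex.exp (Complex.I * ((c * (x - p) * (q - y) : ℝ) : ℂ)))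
      atTop (𝓝 (((2 * π / c : ℝ) : ℂ))) := by
  have hInt : ∀ L a b : ℝ, IntervalIntegrable (hfun c q L) volume a b :=
    fun L a b => intervalIntegrable_of_bounded (hfun_aesm c q L) (hfun_bound_global hc q L) a b
  set M : ℝ → ℂ := fun L => ∫ u in (-(L - |p|))..(L - |p|), hfun c q L u with hM
  set T : ℝ → ℂ := fun L => (∫ u in (-L - p)..(-(L - |p|)), hfun c q L u)
      + (∫ u in (L - |p|)..(L - p), hfun c q L u) with hT
  have E1 : ∀ᶠ L in atTop, (∫ x in (-L)..L, ∫ y in (-L)..L,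
      Complex.exp (Complex.I * ((c * (x - p) * (q - y) : ℝ) : ℂ))) = M L + T L := by
    filter_upwards [eventually_gt_atTop (|p| + |q| + 1)] with L hL
    have step1 : (∫ x in (-L)..L, ∫ y in (-L)..L,
        Complex.exp (Complex.I * ((c * (x - p) * (q - y) : ℝ) : ℂ)))
        = ∫ x in (-L)..L, hfun c q L (x - p) := by
      apply intervalIntegral.integral_congr_ae
      have hp : ∀ᵐ x : ℝ, x ≠ p := by
        rw [ae_iff]
        simp only [not_not, Set.setOf_eq_eq_singleton]
        exact Real.volume_singleton
      filter_upwards [hp] with x hx _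
      have ha : c * (x - p) ≠ 0 := mul_ne_zero hc.ne' (sub_ne_zero.2 hx)
      rw [hfun]
      exact integral_cexp_line ha q L
    have step2 : (∫ x in (-L)..L, hfun c q L (x - p))
        = ∫ u in (-L - p)..(L - p), hfun c q L u := by
      simpa using intervalIntegral.integral_comp_sub_right (a := -L) (b := L) (hfun c q L) p
    have A1 := intervalIntegral.integral_add_adjacent_intervals
      (hInt L (-L - p) (-(L - |p|))) (hInt L (-(L - |p|)) (L - |p|))
    have A2 := intervalIntegral.integral_add_adjacent_intervals
      (hInt L (-L - p) (L - |p|)) (hInt L (L - |p|) (L - p))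
    rw [step1, step2, ← A2, ← A1, hM, hT]
    ring
  have Emid : ∀ᶠ L in atTop, M L
      = (((2/c) * ((∫ t in (0:ℝ)..((c*L+c*q)*(L - |p|)), Real.sin t / t)
          + (∫ t in (0:ℝ)..((c*L-c*q)*(L - |p|)), Real.sin t / t)) : ℝ) : ℂ) := by
    filter_upwards [eventually_gt_atTop (|p| + |q| + 1)] with L hL
    have hq : |q| ≤ |p| + |q| := by linarith [abs_nonneg p]
    have hγ : (0:ℝ) < L - |p| := by
      have := abs_nonneg q; linarith
    have hk2 : (0:ℝ) < c*L + c*q := by nlinarith [abs_nonneg p, neg_abs_le q, le_abs_self q]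
    have hk1 : (0:ℝ) < c*L - c*q := by nlinarith [abs_nonneg p, neg_abs_le q, le_abs_self q]
    have hIntNeg : IntervalIntegrable (fun u => hfun c q L (-u)) volume 0 (L - |p|) := by
      apply intervalIntegrable_of_bounded (hfun_aesm_neg c q L)
        (fun u => hfun_bound_global hc q L (-u))
    have hs : M L = ∫ u in (0:ℝ)..(L - |p|), (hfun c q L u + hfun c q L (-u)) := by
      show (∫ u in (-(L - |p|))..(L - |p|), hfun c q L u) = _
      have A1 := intervalIntegral.integral_add_adjacent_intervals
        (hInt L (-(L - |p|)) 0) (hInt L 0 (L - |p|))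
      have hneg : (∫ u in (-(L - |p|))..(0:ℝ), hfun c q L u)
          = ∫ u in (0:ℝ)..(L - |p|), hfun c q L (-u) := by
        rw [intervalIntegral.integral_comp_neg]
        norm_num
      rw [← A1, hneg, ← intervalIntegral.integral_add hIntNeg (hInt L 0 (L - |p|))]
      congr 1
      ext u
      ring
    rw [hs]
    have : ∀ u : ℝ, hfun c q L u + hfun c q L (-u)
        = (((2/c) * (Real.sin ((c*L+c*q)*u)/u + Real.sin ((c*L-c*q)*u)/u) : ℝ) : ℂ) :=
      hfun_even_sum hc q L
    simp_rw [this]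
    rw [intervalIntegral_ofReal']
    congr 1
    rw [intervalIntegral.integral_const_mul]
    congr 1
    rw [intervalIntegral.integral_add (intervalIntegrable_sinc _ _ _) (intervalIntegrable_sinc _ _ _)]
    rw [sinc_scale hk2, sinc_scale hk1]
  -- limit of middle part
  have hargs2 : Tendsto (fun L : ℝ => (c*L+c*q)*(L - |p|)) atTop atTop := by
    apply Tendsto.atTop_mul_atTop₀
    · exact tendsto_atTop_add_const_right _ _ (Tendsto.const_mul_atTop hc tendsto_id)
    · exact tendsto_atTop_add_const_right _ _ tendsto_id
  have hargs1 : Tendsto (fun L : ℝ => (c*L-c*q)*(L - |p|)) atTop atTop := by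
    apply Tendsto.atTop_mul_atTop₀
    · have := tendsto_atTop_add_const_right atTop (-(c*q)) (Tendsto.const_mul_atTop hc tendsto_id)
      simpa [sub_eq_add_neg] using this
    · exact tendsto_atTop_add_const_right _ _ tendsto_id
  have hmidR : Tendsto (fun L : ℝ => (2/c) * ((∫ t in (0:ℝ)..((c*L+c*q)*(L - |p|)), Real.sin t / t)
      + (∫ t in (0:ℝ)..((c*L-c*q)*(L - |p|)), Real.sin t / t))) atTop (𝓝 ((2/c) * (π/2 + π/2))) :=
    Tendsto.const_mul _ ((si_tendsto.comp hargs2).add (si_tendsto.comp hargs1))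
  have hmid : Tendsto M atTop (𝓝 (((2 * π / c : ℝ) : ℂ))) := by
    have h2 : Tendsto (fun L : ℝ => ((((2/c) * ((∫ t in (0:ℝ)..((c*L+c*q)*(L - |p|)), Real.sin t / t)
        + (∫ t in (0:ℝ)..((c*L-c*q)*(L - |p|)), Real.sin t / t)) : ℝ) : ℂ)))
        atTop (𝓝 (((2 * π / c : ℝ) : ℂ))) := by
      have := (Complex.continuous_ofReal.tendsto _).comp hmidR
      convert this using 2
      · rfl
      push_cast
      field_simp
      ring
    exact h2.congr' (by filter_upwards [Emid] with L h using h.symm)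
  -- limit of tail part
  have htail : Tendsto T atTop (𝓝 0) := by
    apply squeeze_zero_norm' (a := fun L : ℝ => 8 * |p| / (c * (L - |p|)))
    · filter_upwards [eventually_gt_atTop (|p| + |q| + 1)] with L hL
      have hγ : (0:ℝ) < L - |p| := by have := abs_nonneg q; linarith
      have hb1 : ‖∫ u in (-L - p)..(-(L - |p|)), hfun c q L u‖ ≤ (2 / (c * (L - |p|))) * (2*|p|) := by
        have hord : -L - p ≤ -(L - |p|) := by
          have := neg_abs_le p; linarith
        have := intervalIntegral.norm_integral_le_of_norm_le_const
          (C := 2 / (c * (L - |p|))) (f := hfun c q L) (a := -L - p) (b := -(L - |p|)) ?_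
        · refine this.trans ?_
          have h1 : |(-(L - |p|)) - (-L - p)| ≤ 2*|p| := by
            rw [abs_le]; constructor <;> nlinarith [le_abs_self p, neg_abs_le p]
          apply mul_le_mul_of_nonneg_left h1 (by positivity)
        · intro u hu
          rw [Set.uIoc_of_le hord] at hu
          refine hfun_bound_tail hc q L u hγ ?_
          have h2 : u ≤ -(L - |p|) := hu.2
          rw [abs_of_neg (by linarith : u < 0)]
          linarith
      have hb2 : ‖∫ u in (L - |p|)..(L - p), hfun c q L u‖ ≤ (2 / (c * (L - |p|))) * (2*|p|) := by
        have hord : L - |p| ≤ L - p := by have := le_abs_self p; linarith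
        have := intervalIntegral.norm_integral_le_of_norm_le_const
          (C := 2 / (c * (L - |p|))) (f := hfun c q L) (a := L - |p|) (b := L - p) ?_
        · refine this.trans ?_
          have h1 : |(L - p) - (L - |p|)| ≤ 2*|p| := by
            rw [abs_le]; constructor <;> nlinarith [le_abs_self p, neg_abs_le p]
          apply mul_le_mul_of_nonneg_left h1 (by positivity)
        · intro u hu
          rw [Set.uIoc_of_le hord] at hu
          refine hfun_bound_tail hc q L u hγ ?_
          have h2 : L - |p| < u := hu.1
          rw [abs_of_pos (by linarith : 0 < u)]
          linarith
      calc ‖T L‖ ≤ ‖∫ u in (-L - p)..(-(L - |p|)), hfun c q L u‖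
            + ‖∫ u in (L - |p|)..(L - p), hfun c q L u‖ := norm_add_le _ _
      _ ≤ (2 / (c * (L - |p|))) * (2*|p|) + (2 / (c * (L - |p|))) * (2*|p|) := add_le_add hb1 hb2
      _ = 8 * |p| / (c * (L - |p|)) := by field_simp; ring
    · apply Tendsto.div_atTop tendsto_const_nhds
      apply Tendsto.const_mul_atTop hc
      exact tendsto_atTop_add_const_right _ _ tendsto_id
  have := hmid.add htail
  rw [add_zero] at this
  exact this.congr' (by filter_upwards [E1] with L h using h.symm)

noncomputable def fker (c p q : ℝ) (a b : ℝ) : ℂ :=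
  Complex.exp (Complex.I * ((c * (a - p) * (q - b) : ℝ) : ℂ))

noncomputable def gker (c p q : ℝ) (a b : ℝ) : ℂ :=
  Complex.exp (-(Complex.I * ((c * (a - p) * (q - b) : ℝ) : ℂ)))

lemma gker_eq_conj (c p q a b : ℝ) :
    gker c p q a b = (starRingEnd ℂ) (fker c p q a b) := by
  rw [gker, fker, ← Complex.exp_conj]
  congr 1
  simp [map_mul, Complex.conj_I, Complex.conj_ofReal]

lemma intervalIntegral_conj {f : ℝ → ℂ} {a b : ℝ} :
    ∫ x in a..b, (starRingEnd ℂ) (f x) = (starRingEnd ℂ) (∫ x in a..b, f x) := by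
  rw [intervalIntegral, intervalIntegral, integral_conj, integral_conj, map_sub]

lemma fker_continuous (c p q : ℝ) : Continuous (fun z : ℝ × ℝ => fker c p q z.1 z.2) := by
  unfold fker
  apply Complex.continuous_exp.comp
  apply Continuous.mul continuous_const
  exact Complex.continuous_ofReal.comp (by continuity)

lemma twoD_gker {c : ℝ} (hc : 0 < c) (p q : ℝ) :
    Tendsto (fun L : ℝ => ∫ x in (-L)..L, ∫ y in (-L)..L, gker c p q x y)
      atTop (𝓝 (((2 * π / c : ℝ) : ℂ))) := by
  have h1 : ∀ L : ℝ, (∫ x in (-L)..L, ∫ y in (-L)..L, gker c p q x y)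
      = (starRingEnd ℂ) (∫ x in (-L)..L, ∫ y in (-L)..L, fker c p q x y) := by
    intro L
    rw [← intervalIntegral_conj]
    congr 1
    funext x
    rw [← intervalIntegral_conj]
    congr 1
    funext y
    exact gker_eq_conj c p q x y
  simp_rw [h1]
  have h2 := twoD hc p q
  have h3 : Tendsto (starRingEnd ℂ) (𝓝 (((2 * π / c : ℝ) : ℂ)))
      (𝓝 (((2 * π / c : ℝ) : ℂ))) := by
    have := (continuous_star : Continuous (star : ℂ → ℂ)).tendsto (((2 * π / c : ℝ) : ℂ))
    simpa [Complex.conj_ofReal] using this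
  exact h3.comp (h2.congr (fun L => by simp [fker]))

lemma moyalKernel_factor (ℏ : ℝ) (hℏ : 0 < ℏ) (m : ℝ × ℝ) (x y : ℝ × ℝ) :
    moyalKernel ℏ m x y
      = fker (2*ℏ)⁻¹ m.1 m.2 x.1 y.2 * gker (2*ℏ)⁻¹ m.2 m.1 x.2 y.1 := by
  rw [moyalKernel, fker, gker, ← Complex.exp_add]
  congr 1
  have h1 : (ℏ : ℂ) ≠ 0 := Complex.ofReal_ne_zero.2 hℏ.ne'
  push_cast
  field_simp
  ring

lemma moyalKernel_continuous (ℏ : ℝ) (m : ℝ × ℝ) :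
    Continuous (fun z : (ℝ × ℝ) × (ℝ × ℝ) => moyalKernel ℏ m z.1 z.2) := by
  unfold moyalKernel
  apply Complex.continuous_exp.comp
  apply Continuous.mul continuous_const
  apply Complex.continuous_ofReal.comp
  apply Continuous.sub
  · exact ((continuous_fst.fst.sub continuous_const).mul
      (continuous_const.sub continuous_snd.snd))
  · exact ((continuous_fst.snd.sub continuous_const).mul
      (continuous_const.sub continuous_snd.fst))

lemma setIcc_intInt {f : ℝ → ℂ} {L : ℝ} (hL : 0 ≤ L) :
    ∫ x in Set.Icc (-L) L, f x = ∫ x in (-L)..L, f x := by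
  rw [intervalIntegral.integral_of_le (by linarith : -L ≤ L), integral_Icc_eq_integral_Ioc]

lemma fourD_eq (ℏ : ℝ) (hℏ : 0 < ℏ) (m : ℝ × ℝ) {L : ℝ} (hL : 0 ≤ L) :
    (∫ xy in Set.Icc ((-L : ℝ), (-L : ℝ)) (L, L) ×ˢ Set.Icc ((-L : ℝ), (-L : ℝ)) (L, L),
        moyalKernel ℏ m xy.1 xy.2)
    = (∫ a in (-L)..L, ∫ b in (-L)..L, fker (2*ℏ)⁻¹ m.1 m.2 a b)
      * (∫ a in (-L)..L, ∫ b in (-L)..L, gker (2*ℏ)⁻¹ m.2 m.1 a b) := by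
  have hIccEq : Set.Icc ((-L : ℝ), (-L : ℝ)) (L, L)
      = Set.Icc (-L : ℝ) L ×ˢ Set.Icc (-L : ℝ) L := Set.Icc_prod_eq _ _
  have hK : IntegrableOn (fun z : (ℝ × ℝ) × (ℝ × ℝ) => moyalKernel ℏ m z.1 z.2)
      (Set.Icc ((-L : ℝ), (-L : ℝ)) (L, L) ×ˢ Set.Icc ((-L : ℝ), (-L : ℝ)) (L, L)) volume :=
    (moyalKernel_continuous ℏ m).continuousOn.integrableOn_compact
      (isCompact_Icc.prod isCompact_Icc)
  calc (∫ xy in Set.Icc ((-L : ℝ), (-L : ℝ)) (L, L) ×ˢ Set.Icc ((-L : ℝ), (-L : ℝ)) (L, L),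
        moyalKernel ℏ m xy.1 xy.2)
      = ∫ x in Set.Icc ((-L : ℝ), (-L : ℝ)) (L, L), ∫ y in Set.Icc ((-L : ℝ), (-L : ℝ)) (L, L),
          moyalKernel ℏ m x y := by
        rw [Measure.volume_eq_prod]
        rw [Measure.volume_eq_prod] at hK
        exact setIntegral_prod _ hK
    _ = ∫ x in Set.Icc ((-L : ℝ), (-L : ℝ)) (L, L),
          ((∫ b in Set.Icc (-L : ℝ) L, gker (2*ℏ)⁻¹ m.2 m.1 x.2 b)
            * (∫ b in Set.Icc (-L : ℝ) L, fker (2*ℏ)⁻¹ m.1 m.2 x.1 b)) := by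
        apply integral_congr_ae (ae_of_all _ fun x => ?_)
        rw [hIccEq, Measure.volume_eq_prod]
        rw [← setIntegral_prod_mul (fun y1 => gker (2*ℏ)⁻¹ m.2 m.1 x.2 y1)
          (fun y2 => fker (2*ℏ)⁻¹ m.1 m.2 x.1 y2)]
        apply integral_congr_ae (ae_of_all _ fun y => ?_)
        rw [moyalKernel_factor ℏ hℏ m x y]
        ring
    _ = (∫ a in Set.Icc (-L : ℝ) L,
            (fun a' => ∫ b in Set.Icc (-L : ℝ) L, fker (2*ℏ)⁻¹ m.1 m.2 a' b) a)
        * ∫ a in Set.Icc (-L : ℝ) L,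
            (fun a' => ∫ b in Set.Icc (-L : ℝ) L, gker (2*ℏ)⁻¹ m.2 m.1 a' b) a := by
        rw [hIccEq, Measure.volume_eq_prod]
        rw [← setIntegral_prod_mul]
        apply integral_congr_ae (ae_of_all _ fun x => ?_)
        ring
    _ = (∫ a in (-L)..L, ∫ b in (-L)..L, fker (2*ℏ)⁻¹ m.1 m.2 a b)
        * (∫ a in (-L)..L, ∫ b in (-L)..L, gker (2*ℏ)⁻¹ m.2 m.1 a b) := by
        rw [setIcc_intInt hL, setIcc_intInt hL]
        congr 1
        · apply intervalIntegral.integral_congr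
          intro a _
          exact setIcc_intInt hL
        · apply intervalIntegral.integral_congr
          intro a _
          exact setIcc_intInt hL

/-- Normalization of the Moyal product: the improper integral defining `1 ⋆_ℏ 1` equals 1,
as a limit over expanding boxes `[−L,L]⁴`. -/
theorem moyal_normalization (ℏ : ℝ) (hℏ : 0 < ℏ) (m : ℝ × ℝ) :
    Tendsto (fun L : ℝ => ((4 * Real.pi * ℏ) ^ 2 : ℝ)⁻¹ •
        ∫ xy in Set.Icc (-L, -L) (L, L) ×ˢ Set.Icc (-L, -L) (L, L),
          moyalKernel ℏ m xy.1 xy.2) atTop (nhds 1) := by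
  have hc : (0:ℝ) < (2*ℏ)⁻¹ := by positivity
  have h1 : Tendsto (fun L : ℝ => ∫ a in (-L)..L, ∫ b in (-L)..L, fker (2*ℏ)⁻¹ m.1 m.2 a b)
      atTop (𝓝 (((2 * π / (2*ℏ)⁻¹ : ℝ) : ℂ))) :=
    (twoD hc m.1 m.2).congr (fun L => by simp [fker])
  have h2 := twoD_gker hc m.2 m.1
  have hprod := h1.mul h2
  have hsmul := hprod.const_smul (((4 * Real.pi * ℏ) ^ 2 : ℝ)⁻¹)
  have hval : ((4 * Real.pi * ℏ) ^ 2 : ℝ)⁻¹ •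
      ((((2 * π / (2*ℏ)⁻¹ : ℝ)) : ℂ) * (((2 * π / (2*ℏ)⁻¹ : ℝ)) : ℂ)) = 1 := by
    have hπ := Real.pi_pos
    have he : (2 * π / (2*ℏ)⁻¹ : ℝ) = 4 * Real.pi * ℏ := by
      field_simp
      ring
    rw [he, Complex.real_smul, ← Complex.ofReal_mul, ← Complex.ofReal_mul,
      ← Complex.ofReal_one]
    congr 1
    field_simp
  rw [hval] at hsmul
  apply hsmul.congr'
  filter_upwards [eventually_ge_atTop 0] with L hL
  rw [fourD_eq ℏ hℏ m hL]
end
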